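/- For every integer q ≥ 2, the Zarankiewicz number satisfies z(binom(q+1,2), q+1) = q(q+1). -/

import Mathlib

open Finset

/-- A bipartite graph on `α × β` (a set of cells, called 1-edges) is `C₄`-free if no two
distinct rows share two distinct columns. -/
def C4Free {α β : Type*} (E1 : Finset (α × β)) : Prop :=
  ∀ i k : α, ∀ j l : β, i ≠ k → j ≠ l →
    (i, j) ∈ E1 → (i, l) ∈ E1 → (k, j) ∈ E1 → (k, l) ∈ E1 → False

/-- A 2-edge `(i,j;k,l)`: a pair of cells, its two halves `(i,j)` and `(k,l)`. -/
abbrev TwoEdge (α β : Type*) := (α × β) × (α × β)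

/-- A 2-edge `(i,j;k,l)` is nondegenerate if `i ≠ k` and `j ≠ l`. -/
def Nondeg {α β : Type*} (e : TwoEdge α β) : Prop :=
  e.1.1 ≠ e.2.1 ∧ e.1.2 ≠ e.2.2

/-- The simplicity condition: the halves of the 2-edges in `E2` are pairwise distinct
cells, none of which lies in `E1`. -/
def Simple {α β : Type*} (E1 : Finset (α × β)) (E2 : Finset (TwoEdge α β)) : Prop :=
  (∀ e ∈ E2, e.1 ≠ e.2) ∧
  (∀ e ∈ E2, e.1 ∉ E1 ∧ e.2 ∉ E1) ∧
  (∀ e ∈ E2, ∀ f ∈ E2, e ≠ f →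
    e.1 ≠ f.1 ∧ e.1 ≠ f.2 ∧ e.2 ≠ f.1 ∧ e.2 ≠ f.2)

/-- A cell is occupied if it lies in `E1` or is a half of some 2-edge in `E2`. -/
def Occupied {α β : Type*} (E1 : Finset (α × β)) (E2 : Finset (TwoEdge α β))
    (c : α × β) : Prop :=
  c ∈ E1 ∨ ∃ e ∈ E2, e.1 = c ∨ e.2 = c

/-- `(E1, E2)` contains a generalized `C₄`-cycle:
(1) a classical `C₄` among 1-edges; or
(2) a nondegenerate 2-edge `(i,j;k,l) ∈ E2` with both opposite cells `(i,l)`, `(k,j)` occupied; or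
(3) a 2-edge `(i,j;p,q) ∈ E2` and a cell `(k,l)` with `k ∉ {i,p}`, `l ∉ {j,q}` such that the
five cells `(k,l), (k,j), (k,q), (i,l), (p,l)` are all occupied, these five cells being
pairwise distinct in case the 2-edge is nondegenerate. -/
def HasGenC4 {α β : Type*} (E1 : Finset (α × β)) (E2 : Finset (TwoEdge α β)) : Prop :=
  (∃ i k : α, ∃ j l : β, i ≠ k ∧ j ≠ l ∧
      (i, j) ∈ E1 ∧ (i, l) ∈ E1 ∧ (k, j) ∈ E1 ∧ (k, l) ∈ E1) ∨
  (∃ e ∈ E2, Nondeg e ∧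
      Occupied E1 E2 (e.1.1, e.2.2) ∧ Occupied E1 E2 (e.2.1, e.1.2)) ∨
  (∃ e ∈ E2, ∃ k : α, ∃ l : β,
      k ≠ e.1.1 ∧ k ≠ e.2.1 ∧ l ≠ e.1.2 ∧ l ≠ e.2.2 ∧
      Occupied E1 E2 (k, l) ∧ Occupied E1 E2 (k, e.1.2) ∧ Occupied E1 E2 (k, e.2.2) ∧
      Occupied E1 E2 (e.1.1, l) ∧ Occupied E1 E2 (e.2.1, l) ∧
      (Nondeg e →
        [(k, l), (k, e.1.2), (k, e.2.2), (e.1.1, l), (e.2.1, l)].Pairwise (· ≠ ·)))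

/-- The Zarankiewicz number `z(m,n)`: the maximum number of cells of a `C₄`-free bipartite
graph on `[m] × [n]`. -/
noncomputable def zar (m n : ℕ) : ℕ :=
  sSup {k | ∃ E1 : Finset (Fin m × Fin n), C4Free E1 ∧ E1.card = k}

/-- An admissible limited augmented bipartite graph on `[m] × [n]`: `E1` is `C₄`-free with
`|E1| = z(m,n)`, the simplicity condition holds, and there is no generalized `C₄`-cycle. -/
def Admissible {m n : ℕ} (E1 : Finset (Fin m × Fin n))
    (E2 : Finset (TwoEdge (Fin m) (Fin n))) : Prop :=
  C4Free E1 ∧ E1.card = zar m n ∧ Simple E1 E2 ∧ ¬ HasGenC4 E1 E2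

/-- The limited augmented Zarankiewicz number `z_L(m,n)`: the maximum of `|E1| + |E2|`
over all admissible limited augmented bipartite graphs on `[m] × [n]`. -/
noncomputable def zL (m n : ℕ) : ℕ :=
  sSup {k | ∃ (E1 : Finset (Fin m × Fin n)) (E2 : Finset (TwoEdge (Fin m) (Fin n))),
    Admissible E1 E2 ∧ E1.card + E2.card = k}

lemma two_mul_choose (q : ℕ) : 2 * Nat.choose (q + 1) 2 = q * (q + 1) := by
  induction q with
  | zero => rfl
  | succ n ih =>
    rw [show n + 1 + 1 = (n+1) + 1 from rfl, Nat.choose_succ_succ (n+1) 1,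
      Nat.choose_one_right]
    nlinarith [ih]

lemma zar_upper (q : ℕ) (E1 : Finset (Fin (Nat.choose (q + 1) 2) × Fin (q + 1)))
    (h : C4Free E1) : E1.card ≤ q * (q + 1) := by
  classical
  set d : Fin (Nat.choose (q + 1) 2) → ℕ :=
    fun i => (E1.filter fun c => c.1 = i).card with hd
  have hcard : E1.card = ∑ i : Fin (Nat.choose (q + 1) 2), d i :=
    Finset.card_eq_sum_card_fiberwise (fun x _ => Finset.mem_univ x.1)
  set T := E1.offDiag.filter (fun p => p.1.1 = p.2.1) with hT
  have hTcard : T.card = ∑ i : Fin (Nat.choose (q + 1) 2), (d i * d i - d i) := by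
    rw [Finset.card_eq_sum_card_fiberwise
      (f := fun p => p.1.1) (t := Finset.univ) (fun x _ => Finset.mem_univ _)]
    refine Finset.sum_congr rfl fun i _ => ?_
    have hfib : T.filter (fun p => p.1.1 = i) = (E1.filter fun c => c.1 = i).offDiag := by
      ext p
      simp only [hT, Finset.mem_filter, Finset.mem_offDiag]
      constructor
      · rintro ⟨⟨⟨ha, hb, hc⟩, hrow⟩, hi⟩
        exact ⟨⟨ha, hi⟩, ⟨hb, by rw [← hrow, hi]⟩, hc⟩
      · rintro ⟨⟨ha, hi⟩, ⟨hb, hk⟩, hc⟩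
        exact ⟨⟨⟨ha, hb, hc⟩, by rw [hi, hk]⟩, hi⟩
    rw [hfib, Finset.offDiag_card]
  have hTle : T.card ≤ (q + 1) * (q + 1) - (q + 1) := by
    have hle := Finset.card_le_card_of_injOn (f := fun p => (p.1.2, p.2.2))
      (t := (Finset.univ : Finset (Fin (q + 1))).offDiag) (s := T) ?_ ?_
    · simpa [Finset.offDiag_card] using hle
    · intro p hp
      simp only [hT, Finset.mem_coe, Finset.mem_filter, Finset.mem_offDiag] at hp
      obtain ⟨⟨h1, h2, h3⟩, h4⟩ := hp
      simp only [Finset.mem_coe, Finset.mem_offDiag, Finset.mem_univ, true_and, ne_eq]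
      intro hjl
      exact h3 (Prod.ext h4 hjl)
    · intro p hp p' hp' heq
      simp only [hT, Finset.coe_filter, Set.mem_setOf_eq, Finset.mem_offDiag] at hp hp'
      obtain ⟨⟨h1, h2, h3⟩, h4⟩ := hp
      obtain ⟨⟨h1', h2', h3'⟩, h4'⟩ := hp'
      have heq' : (p.1.2, p.2.2) = (p'.1.2, p'.2.2) := heq
      rw [Prod.mk.injEq] at heq'
      obtain ⟨hj, hl⟩ := heq'
      have hjl : p.1.2 ≠ p.2.2 := fun hx => h3 (Prod.ext h4 hx)
      by_cases hik : p.1.1 = p'.1.1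
      · exact Prod.ext (Prod.ext hik hj) (Prod.ext (by rw [← h4, hik, h4']) hl)
      · exact absurd (h p.1.1 p'.1.1 p.1.2 p.2.2 hik hjl
          h1 (by rw [h4]; exact h2) (by rw [hj]; exact h1')
          (by rw [hl, h4']; exact h2')) not_false
  have hpt : ∀ x : ℕ, 2 * x ≤ 2 + (x * x - x) := by
    intro x
    match x with
    | 0 => simp
    | 1 => simp
    | (e + 2) =>
      have h1 : (e + 2) * (e + 2) = (e + 2) * (e + 1) + (e + 2) := by ring
      have h2 : 2 * (e + 2) ≤ 2 + (e + 2) * (e + 1) := by nlinarith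
      omega
  have hsum : 2 * E1.card ≤ 2 * Nat.choose (q + 1) 2 + T.card := by
    rw [hcard, hTcard, Finset.mul_sum]
    calc ∑ i : Fin (Nat.choose (q + 1) 2), 2 * d i
        ≤ ∑ i : Fin (Nat.choose (q + 1) 2), (2 + (d i * d i - d i)) :=
          Finset.sum_le_sum fun i _ => hpt (d i)
      _ = 2 * Nat.choose (q + 1) 2 +
          ∑ i : Fin (Nat.choose (q + 1) 2), (d i * d i - d i) := by
          rw [Finset.sum_add_distrib]
          simp [Finset.card_univ, mul_comm]
  have h2m := two_mul_choose q
  have hsq : (q + 1) * (q + 1) = q * (q + 1) + (q + 1) := by ring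
  omega

lemma zar_lower (q : ℕ) : ∃ E1 : Finset (Fin (Nat.choose (q + 1) 2) × Fin (q + 1)),
    C4Free E1 ∧ E1.card = q * (q + 1) := by
  classical
  set m := Nat.choose (q + 1) 2 with hm
  have hcardeq : Fintype.card { s : Finset (Fin (q+1)) // s.card = 2 } = m := by
    simp [hm]
  set e : Fin m ≃ { s : Finset (Fin (q+1)) // s.card = 2 } :=
    (Fintype.equivFinOfCardEq hcardeq).symm with he
  set E1 : Finset (Fin m × Fin (q+1)) :=
    Finset.univ.biUnion (fun i => ((e i : Finset (Fin (q+1)))).image (fun j => (i, j)))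
    with hE1
  have hmem : ∀ i j, (i, j) ∈ E1 ↔ j ∈ (e i : Finset (Fin (q+1))) := by
    intro i j
    simp only [hE1, Finset.mem_biUnion, Finset.mem_image, Finset.mem_univ, true_and,
      Prod.mk.injEq]
    constructor
    · rintro ⟨a, b, hb, rfl, rfl⟩; exact hb
    · intro hj; exact ⟨i, j, hj, rfl, rfl⟩
  refine ⟨E1, ?_, ?_⟩
  · intro i k j l hik hjl h1 h2 h3 h4
    rw [hmem] at h1 h2 h3 h4
    have hsub1 : ({j, l} : Finset (Fin (q+1))) ⊆ (e i : Finset (Fin (q+1))) := by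
      intro x hx; simp only [Finset.mem_insert, Finset.mem_singleton] at hx
      rcases hx with rfl | rfl <;> assumption
    have hsub2 : ({j, l} : Finset (Fin (q+1))) ⊆ (e k : Finset (Fin (q+1))) := by
      intro x hx; simp only [Finset.mem_insert, Finset.mem_singleton] at hx
      rcases hx with rfl | rfl <;> assumption
    have hc : ({j, l} : Finset (Fin (q+1))).card = 2 := Finset.card_pair hjl
    have h1' : ({j, l} : Finset (Fin (q+1))) = (e i : Finset (Fin (q+1))) :=
      Finset.eq_of_subset_of_card_le hsub1 (by rw [(e i).2, hc])
    have h2' : ({j, l} : Finset (Fin (q+1))) = (e k : Finset (Fin (q+1))) :=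
      Finset.eq_of_subset_of_card_le hsub2 (by rw [(e k).2, hc])
    exact hik (e.injective (Subtype.ext (h1' ▸ h2')))
  · rw [hE1, Finset.card_biUnion]
    · have : ∀ i : Fin m, (((e i : Finset (Fin (q+1)))).image (fun j => (i, j))).card = 2 := by
        intro i
        rw [Finset.card_image_of_injective _ (fun a b hab => (Prod.mk.injEq _ _ _ _ ▸ hab).2),
          (e i).2]
      rw [Finset.sum_congr rfl (fun i _ => this i)]
      simp [Finset.card_univ, ← two_mul_choose q, mul_comm]
      exact hm
    · intro i _ k _ hik
      rw [Function.onFun, Finset.disjoint_left]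
      rintro ⟨a, b⟩ ha hb
      simp only [Finset.mem_image] at ha hb
      obtain ⟨x, -, hx⟩ := ha
      obtain ⟨y, -, hy⟩ := hb
      rw [Prod.mk.injEq] at hx hy
      exact hik (hx.1.trans hy.1.symm)

theorem zar_choose (q : ℕ) (hq : 2 ≤ q) :
    zar (Nat.choose (q + 1) 2) (q + 1) = q * (q + 1) := by
  obtain ⟨E1, hC4, hcard⟩ := zar_lower q
  unfold zar
  apply le_antisymm
  · apply csSup_le
    · exact ⟨q * (q + 1), E1, hC4, hcard⟩
    · rintro k ⟨F, hF, rfl⟩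
      exact zar_upper q F hF
  · apply le_csSup _ (Set.mem_setOf.mpr ⟨E1, hC4, hcard⟩)
    rw [bddAbove_def]
    refine ⟨q * (q + 1), fun k hk => ?_⟩
    obtain ⟨F, hF, rfl⟩ := hk
    exact zar_upper q F hF
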